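/- Let x₁, x₂, x₃ : [0,∞) → ℝ with x₁ differentiable, x₁'(t) = a(1−x₁(t)) − q(x₂(t),x₃(t))·x₁(t) for all t ≥ 0, and x₁(t) ≥ 0, 0 ≤ x₂(t) ≤ c₁/d, 0 ≤ x₃(t) ≤ c_{1,M}/d_M for all t ≥ 0. Set λ = a + q₁ + q₂c₁/d + q₃c_{1,M}/d_M and b₁ = a/λ. Then for all t ≥ 0, x₁(t) ≥ b₁·(1 − e^{−λt}) + x₁(0)·e^{−λt}. -/

import Mathlib

open Set Real

/-- lower bound on `x₁` by the solution of the comparison ODE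
`y' = a - λ y`, with `λ = a + q₁ + q₂ c₁/d + q₃ c₁M/dM` and `b₁ = a/λ`. -/
theorem stmt_6
    (a q₁ c₁ d c₁M dM q₂ q₃ : ℝ)
    (ha : 0 < a) (hq₁ : 0 < q₁) (hc₁ : 0 < c₁) (hd : 0 < d)
    (hc₁M : 0 < c₁M) (hdM : 0 < dM) (hq₂ : 0 ≤ q₂) (hq₃ : 0 ≤ q₃)
    (lam b₁ : ℝ)
    (hlam : lam = a + q₁ + q₂ * (c₁ / d) + q₃ * (c₁M / dM))
    (hb₁ : b₁ = a / lam)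
    (x₁ x₂ x₃ : ℝ → ℝ)
    (hx₁ : ∀ t ≥ (0:ℝ), HasDerivAt x₁
      (a * (1 - x₁ t) - (q₁ + q₂ * x₂ t + q₃ * x₃ t) * x₁ t) t)
    (hb : ∀ t ≥ (0:ℝ), 0 ≤ x₁ t ∧ x₂ t ∈ Icc 0 (c₁ / d) ∧
      x₃ t ∈ Icc 0 (c₁M / dM)) :
    ∀ t ≥ (0:ℝ), b₁ * (1 - Real.exp (-lam * t))
      + x₁ 0 * Real.exp (-lam * t) ≤ x₁ t := by
  have hlampos : 0 < lam := by
    have h2 : 0 ≤ q₂ * (c₁ / d) := mul_nonneg hq₂ (by positivity)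
    have h3 : 0 ≤ q₃ * (c₁M / dM) := mul_nonneg hq₃ (by positivity)
    rw [hlam]; linarith
  have hba : b₁ * lam = a := by
    rw [hb₁]; field_simp
  set g : ℝ → ℝ := fun s => x₁ s * Real.exp (lam * s) - b₁ * (Real.exp (lam * s) - 1) - x₁ 0
    with hg
  have hgd : ∀ s ≥ (0:ℝ), HasDerivAt g
      (Real.exp (lam * s) *
        ((a * (1 - x₁ s) - (q₁ + q₂ * x₂ s + q₃ * x₃ s) * x₁ s) + lam * x₁ s - a)) s := by
    intro s hs
    have he : HasDerivAt (fun s => Real.exp (lam * s)) (lam * Real.exp (lam * s)) s := by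
      have := (Real.hasDerivAt_exp (lam * s)).comp s ((hasDerivAt_id s).const_mul lam)
      simpa [mul_comm, Function.comp_def] using this
    have h1 := ((hx₁ s hs).mul he).sub
      ((he.sub_const 1).const_mul b₁)
    have h2 := h1.sub_const (x₁ 0)
    refine h2.congr_deriv ?_
    ring_nf
    nlinarith [hba, Real.exp_pos (lam * s)]
  have hgd' : ∀ s ≥ (0:ℝ),
      0 ≤ Real.exp (lam * s) *
        ((a * (1 - x₁ s) - (q₁ + q₂ * x₂ s + q₃ * x₃ s) * x₁ s) + lam * x₁ s - a) := by
    intro s hs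
    obtain ⟨hx1, ⟨hx2l, hx2u⟩, hx3l, hx3u⟩ := hb s hs
    have key : 0 ≤ (a * (1 - x₁ s) - (q₁ + q₂ * x₂ s + q₃ * x₃ s) * x₁ s) + lam * x₁ s - a := by
      have : (a * (1 - x₁ s) - (q₁ + q₂ * x₂ s + q₃ * x₃ s) * x₁ s) + lam * x₁ s - a
          = (q₂ * (c₁ / d - x₂ s) + q₃ * (c₁M / dM - x₃ s)) * x₁ s := by
        rw [hlam]; ring
      rw [this]
      apply mul_nonneg _ hx1
      have := mul_nonneg hq₂ (sub_nonneg.2 hx2u)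
      have := mul_nonneg hq₃ (sub_nonneg.2 hx3u)
      linarith
    exact mul_nonneg (Real.exp_pos _).le key
  intro t ht
  have hgmono : g 0 ≤ g t := by
    rcases eq_or_lt_of_le ht with h | h
    · rw [← h]
    · have hmono : MonotoneOn g (Icc 0 t) := by
        apply monotoneOn_of_deriv_nonneg (convex_Icc 0 t)
        · exact fun s hs => ((hgd s hs.1).continuousAt).continuousWithinAt
        · intro s hs
          rw [interior_Icc] at hs
          exact ((hgd s hs.1.le).differentiableAt).differentiableWithinAt
        · intro s hs
          rw [interior_Icc] at hs
          rw [(hgd s hs.1.le).deriv]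
          exact hgd' s hs.1.le
      exact hmono (left_mem_Icc.2 ht) (right_mem_Icc.2 ht) ht
  have hg0 : g 0 = 0 := by simp [hg]
  rw [hg0] at hgmono
  have hE : Real.exp (-lam * t) * Real.exp (lam * t) = 1 := by
    rw [← Real.exp_add]; ring_nf; exact Real.exp_zero
  have hEpos := Real.exp_pos (-lam * t)
  have hgt : 0 ≤ x₁ t * Real.exp (lam * t) - b₁ * (Real.exp (lam * t) - 1) - x₁ 0 := hgmono
  have h := mul_nonneg hEpos.le hgt
  have hid : Real.exp (-lam * t) *
      (x₁ t * Real.exp (lam * t) - b₁ * (Real.exp (lam * t) - 1) - x₁ 0)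
      = x₁ t - b₁ + b₁ * Real.exp (-lam * t) - x₁ 0 * Real.exp (-lam * t) := by
    linear_combination (x₁ t - b₁) * hE
  rw [hid] at h
  linarith
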